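/- For every real polynomial p of degree at most 11, every x₀ ∈ ℝ and every h > 0, p''(x₀) = (1065/(1798h²))·(p(x₀−h) + p(x₀+h)) + (519/(1798h²))·(p(x₀−2h) + p(x₀+2h)) + (79/(16182h²))·(p(x₀−3h) + p(x₀+3h)) − (14335/(8091h²))·p(x₀) − (334/899)·(p''(x₀−h) + p''(x₀+h)) − (43/1798)·(p''(x₀−2h) + p''(x₀+2h)). -/

import Mathlib

open Polynomial

set_option maxHeartbeats 4000000 in
theorem compact_fd10_second_deriv_exact_on_polynomials (p : Polynomial ℝ)
    (hp : p.degree ≤ 11) (x₀ h : ℝ) (hh : 0 < h) :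
    p.derivative.derivative.eval x₀ =
      1065 / (1798 * h ^ 2) * (p.eval (x₀ - h) + p.eval (x₀ + h)) +
      519 / (1798 * h ^ 2) * (p.eval (x₀ - 2 * h) + p.eval (x₀ + 2 * h)) +
      79 / (16182 * h ^ 2) * (p.eval (x₀ - 3 * h) + p.eval (x₀ + 3 * h)) -
      14335 / (8091 * h ^ 2) * p.eval x₀ -
      334 / 899 * (p.derivative.derivative.eval (x₀ - h) +
        p.derivative.derivative.eval (x₀ + h)) -
      43 / 1798 * (p.derivative.derivative.eval (x₀ - 2 * h) +
        p.derivative.derivative.eval (x₀ + 2 * h)) := by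
  have hh' : h ≠ 0 := ne_of_gt hh
  let S : Submodule ℝ (Polynomial ℝ) :=
    { carrier := {q | q.derivative.derivative.eval x₀ =
        1065 / (1798 * h ^ 2) * (q.eval (x₀ - h) + q.eval (x₀ + h)) +
        519 / (1798 * h ^ 2) * (q.eval (x₀ - 2 * h) + q.eval (x₀ + 2 * h)) +
        79 / (16182 * h ^ 2) * (q.eval (x₀ - 3 * h) + q.eval (x₀ + 3 * h)) -
        14335 / (8091 * h ^ 2) * q.eval x₀ -
        334 / 899 * (q.derivative.derivative.eval (x₀ - h) +
          q.derivative.derivative.eval (x₀ + h)) -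
        43 / 1798 * (q.derivative.derivative.eval (x₀ - 2 * h) +
          q.derivative.derivative.eval (x₀ + 2 * h))}
      add_mem' := by
        intro a b ha hb
        simp only [Set.mem_setOf_eq, derivative_add, eval_add] at *
        rw [ha, hb]; ring
      zero_mem' := by simp
      smul_mem' := by
        intro c q hq
        simp only [Set.mem_setOf_eq, derivative_smul, eval_smul, smul_eq_mul] at *
        rw [hq]; ring }
  have hmem : p ∈ Polynomial.degreeLE ℝ 11 := Polynomial.mem_degreeLE.2 hp
  have h11 : (11 : WithBot ℕ) = ((11 : ℕ) : WithBot ℕ) := rfl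
  rw [h11, Polynomial.degreeLE_eq_span_X_pow] at hmem
  have hsub : Submodule.span ℝ ↑((Finset.range 12).image fun n => (X : Polynomial ℝ) ^ n) ≤ S := by
    rw [Submodule.span_le]
    intro q hq
    simp only [Finset.coe_image, Set.mem_image, Finset.mem_coe, Finset.mem_range] at hq
    obtain ⟨n, hn, rfl⟩ := hq
    simp only [S, SetLike.mem_coe, Submodule.mem_mk, AddSubmonoid.mem_mk, AddSubsemigroup.mem_mk,
      Set.mem_setOf_eq]
    interval_cases n <;>
      · simp only [derivative_X_pow, derivative_mul, derivative_C, derivative_X, eval_mul,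
          eval_pow, eval_C, eval_X, pow_zero, pow_one, derivative_one, derivative_zero, eval_zero, eval_one,
          zero_mul, mul_zero, mul_one, zero_add, add_zero, Nat.cast_ofNat]
        field_simp
        ring
  exact hsub hmem
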